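/- Let h, k be positive integers and let G = (V,E) be a graph whose longest path has length exactly h and which contains no cycle of length h+1. If G is a (k,2)-expander, then there are at least (k+1)²/2 non-edges of G such that adding any one of them to G creates a cycle of length h+1. -/

import Mathlib

open scoped Classical

/-- External neighborhood of a vertex set `S` in a graph `G`. -/
noncomputable def extNbhd {V : Type*} [Fintype V] [DecidableEq V]
    (G : SimpleGraph V) (S : Finset V) : Finset V :=
  Finset.univ.filter (fun v => v ∉ S ∧ ∃ u ∈ S, G.Adj u v)

/-- `G` is a `(k, α)`-expander (here with `α = 2`). -/
def IsTwoExpander {V : Type*} [Fintype V] [DecidableEq V]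
    (G : SimpleGraph V) (k : ℕ) : Prop :=
  ∀ U : Finset V, U.card ≤ k → 2 * U.card ≤ (extNbhd G U).card

set_option linter.unusedSectionVars false

namespace PosaAux
variable {V : Type*} [DecidableEq V]

def edgesOf (l : List V) : List (Sym2 V) := (l.zip l.tail).map (fun p => s(p.1, p.2))

@[simp] lemma edgesOf_nil : edgesOf ([] : List V) = [] := rfl
@[simp] lemma edgesOf_single (a : V) : edgesOf [a] = [] := rfl
@[simp] lemma edgesOf_cons₂ (a b : V) (t : List V) :
    edgesOf (a :: b :: t) = s(a,b) :: edgesOf (b :: t) := rfl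

lemma mem_edgesOf {l : List V} {e : Sym2 V} :
    e ∈ edgesOf l ↔ ∃ i a b, l[i]? = some a ∧ l[i+1]? = some b ∧ e = s(a,b) := by
  induction l with
  | nil => simp [edgesOf]
  | cons a t ih =>
    cases t with
    | nil => simp [edgesOf]
    | cons b t' =>
      simp only [edgesOf_cons₂, List.mem_cons, ih]
      constructor
      · rintro (rfl | ⟨i, x, y, hx, hy, rfl⟩)
        · exact ⟨0, a, b, by simp, by simp, rfl⟩
        · exact ⟨i+1, x, y, by simpa using hx, by simpa using hy, rfl⟩
      · rintro ⟨i, x, y, hx, hy, rfl⟩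
        cases i with
        | zero =>
          simp only [List.getElem?_cons_zero, Option.some.injEq] at hx
          simp only [List.getElem?_cons_succ, List.getElem?_cons_zero, Option.some.injEq] at hy
          subst hx; subst hy; exact Or.inl rfl
        | succ j =>
          simp only [List.getElem?_cons_succ] at hx hy
          exact Or.inr ⟨j, x, y, by simpa using hx, by simpa using hy, rfl⟩

lemma head?_eq_get0 (l : List V) : l.head? = l[0]? := by cases l <;> simp

lemma getLast?_eq_getElem? (l : List V) : l.getLast? = l[l.length - 1]? := by
  cases l with
  | nil => simp
  | cons a t =>
    rw [List.getLast?_eq_getLast (l := a :: t) (by simp), List.getLast_eq_getElem]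
    simp [List.getElem?_eq_getElem]

-- index helpers for nodup lists
lemma nodup_idx_unique {l : List V} (hnd : l.Nodup) {i j : ℕ} {a : V}
    (hi : l[i]? = some a) (hj : l[j]? = some a) : i = j := by
  rw [List.getElem?_eq_some_iff] at hi hj
  obtain ⟨hi', hia⟩ := hi; obtain ⟨hj', hja⟩ := hj
  exact (hnd.getElem_inj_iff).mp (hia.trans hja.symm)

-- edges incident to a vertex in a nodup list
lemma edge_mem_nodup {l : List V} (hnd : l.Nodup) {x w : V} {j : ℕ}
    (hw : l[j]? = some w) (he : s(x, w) ∈ edgesOf l) :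
    l[j-1]? = some x ∨ l[j+1]? = some x := by
  rw [mem_edgesOf] at he
  obtain ⟨i, a, b, ha, hb, hab⟩ := he
  rw [Sym2.eq_iff] at hab
  rcases hab with ⟨rfl, rfl⟩ | ⟨rfl, rfl⟩
  · -- a = x, b = w : i+1 = j
    have : i + 1 = j := nodup_idx_unique hnd hb hw
    subst this; left; simpa using ha
  · -- a = w, b = x : i = j
    have : i = j := nodup_idx_unique hnd ha hw
    subst this; right; exact hb

variable (G : SimpleGraph V)

lemma exists_walk : ∀ (l : List V) (hc : l.Chain' G.Adj) (hne : l ≠ []),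
    ∃ p : G.Walk (l.head hne) (l.getLast hne), p.support = l ∧ p.edges = edgesOf l
  | [], _, hne => absurd rfl hne
  | [a], _, _ => ⟨SimpleGraph.Walk.nil, by simp, by simp⟩
  | a :: b :: t, hc, _ => by
    obtain ⟨hab, hc'⟩ := List.isChain_cons_cons.mp hc
    obtain ⟨p, hp, hpe⟩ := exists_walk (b :: t) hc' (by simp)
    refine ⟨(SimpleGraph.Walk.cons hab p).copy rfl ((List.getLast_cons (by simp)).symm), ?_, ?_⟩
    · exact (SimpleGraph.Walk.support_copy _ _ _).trans (congrArg (List.cons a) hp)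
    · exact (SimpleGraph.Walk.edges_copy _ _ _).trans (congrArg (List.cons s(a, b)) hpe)

section maxpath
variable {G} {h : ℕ}

lemma list_path_length_le (hmax : ∀ (u v : V) (p : G.Walk u v), p.IsPath → p.length ≤ h)
    (l : List V) (hnd : l.Nodup) (hc : l.Chain' G.Adj) : l.length ≤ h + 1 := by
  rcases eq_or_ne l [] with rfl | hne
  · simp
  obtain ⟨p, hp, -⟩ := exists_walk G l hc hne
  have hpath : p.IsPath := (p.isPath_def).mpr (by rw [hp]; exact hnd)
  have := p.length_support
  rw [hp] at this
  have := hmax _ _ p hpath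
  omega

lemma no_closing_edge (hh2 : 2 ≤ h)
    (hnocycle : ∀ (u : V) (c : G.Walk u u), c.IsCycle → c.length ≠ h + 1)
    (l : List V) (hnd : l.Nodup) (hc : l.Chain' G.Adj) (hlen : l.length = h + 1)
    (hne : l ≠ []) : ¬ G.Adj (l.getLast hne) (l.head hne) := by
  intro hadj
  obtain ⟨p, hp, hpe⟩ := exists_walk G l hc hne
  have hpath : p.IsPath := (p.isPath_def).mpr (by rw [hp]; exact hnd)
  have hplen : p.length = h := by have := p.length_support; rw [hp] at this; omega
  have h0 : l[0]? = some (l.head hne) := by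
    rw [← head?_eq_get0]; exact List.head?_eq_head hne
  have hlast : l[h]? = some (l.getLast hne) := by
    have := getLast?_eq_getElem? l
    rw [List.getLast?_eq_getLast hne] at this
    rw [← show l.length - 1 = h by omega]; exact this.symm
  have hnotmem : s(l.getLast hne, l.head hne) ∉ p.edges := by
    rw [hpe]; intro hmem
    rcases edge_mem_nodup hnd h0 hmem with h1 | h1
    · simp only [Nat.zero_sub] at h1
      have := nodup_idx_unique hnd h1 hlast
      omega
    · have := nodup_idx_unique hnd h1 hlast
      omega
  have hcyc : (SimpleGraph.Walk.cons hadj p).IsCycle :=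
    (SimpleGraph.Walk.cons_isCycle_iff p hadj).mpr ⟨hpath, hnotmem⟩
  exact hnocycle _ _ hcyc (by simp [hplen])

end maxpath

lemma mem_edgesOf_prefix {a b : List V} {e : Sym2 V} (he : e ∈ edgesOf a) :
    e ∈ edgesOf (a ++ b) := by
  rw [mem_edgesOf] at he ⊢
  obtain ⟨i, x, y, hx, hy, rfl⟩ := he
  have hy' := (List.getElem?_eq_some_iff.mp hy).1
  have hx' := (List.getElem?_eq_some_iff.mp hx).1
  refine ⟨i, x, y, ?_, ?_, rfl⟩
  · rw [List.getElem?_append]; simp [hx', hx]; exact (List.getElem?_eq_some_iff.mp hx).2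
  · rw [List.getElem?_append]; simp [hy', hy]; exact (List.getElem?_eq_some_iff.mp hy).2

lemma mem_edgesOf_suffix {a b : List V} {e : Sym2 V} (he : e ∈ edgesOf b) :
    e ∈ edgesOf (a ++ b) := by
  rw [mem_edgesOf] at he ⊢
  obtain ⟨i, x, y, hx, hy, rfl⟩ := he
  refine ⟨a.length + i, x, y, ?_, ?_, rfl⟩
  · rw [List.getElem?_append_right (by omega)]
    simpa using hx
  · rw [List.getElem?_append_right (by omega)]
    rw [show a.length + i + 1 - a.length = i + 1 by omega]
    exact hy

lemma mem_edgesOf_reverse_of {l : List V} {e : Sym2 V} (he : e ∈ edgesOf l) :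
    e ∈ edgesOf l.reverse := by
  rw [mem_edgesOf] at he ⊢
  obtain ⟨i, x, y, hx, hy, rfl⟩ := he
  have hy' := (List.getElem?_eq_some_iff.mp hy).1
  have hx' := (List.getElem?_eq_some_iff.mp hx).1
  refine ⟨l.length - 2 - i, y, x, ?_, ?_, Sym2.eq_swap⟩
  · rw [List.getElem?_reverse (by omega)]
    rw [show l.length - 1 - (l.length - 2 - i) = i + 1 by omega]
    exact hy
  · rw [List.getElem?_reverse (by omega)]
    rw [show l.length - 1 - (l.length - 2 - i + 1) = i by omega]
    exact hx

lemma mem_edgesOf_reverse {l : List V} {e : Sym2 V} :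
    e ∈ edgesOf l.reverse ↔ e ∈ edgesOf l := by
  constructor
  · intro he
    have := mem_edgesOf_reverse_of he
    rwa [List.reverse_reverse] at this
  · exact mem_edgesOf_reverse_of

def rot (l : List V) (i : ℕ) : List V := l.take (i+1) ++ (l.drop (i+1)).reverse

lemma rot_perm (l : List V) (i : ℕ) : (rot l i).Perm l := by
  have h1 : (rot l i).Perm (l.take (i+1) ++ l.drop (i+1)) :=
    List.Perm.append_left _ (List.reverse_perm _)
  rwa [List.take_append_drop] at h1

lemma length_rot (l : List V) (i : ℕ) : (rot l i).length = l.length :=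
  (rot_perm l i).length_eq

lemma head?_rot (l : List V) (i : ℕ) (hne : l ≠ []) : (rot l i).head? = l.head? := by
  rw [head?_eq_get0, head?_eq_get0, rot, List.getElem?_append]
  have h0 : 0 < l.length := List.length_pos_iff.mpr hne
  rw [if_pos (by simp [List.length_take]; omega), List.getElem?_take, if_pos (by omega)]

lemma getLast?_rot (l : List V) (i : ℕ) (hi : i + 1 < l.length) :
    (rot l i).getLast? = l[i+1]? := by
  rw [getLast?_eq_getElem?, length_rot, rot, List.getElem?_append_right
    (by rw [List.length_take]; omega)]
  rw [List.length_take, List.getElem?_reverse (by rw [List.length_drop]; omega)]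
  rw [List.length_drop, List.getElem?_drop]
  congr 1
  omega

lemma nodup_rot {l : List V} {i : ℕ} (hnd : l.Nodup) : (rot l i).Nodup :=
  (rot_perm l i).nodup_iff.mpr hnd

variable {G}

lemma flip_adj : flip G.Adj = G.Adj := by
  funext x y; exact propext ⟨fun h => h.symm, fun h => h.symm⟩

lemma chain'_rot {l : List V} {i : ℕ} {x y : V} (hc : l.Chain' G.Adj)
    (hx : l.getLast? = some x) (hy : l[i]? = some y) (hadj : G.Adj x y)
    (hi : i + 1 < l.length) : (rot l i).Chain' G.Adj := by
  rw [rot]; unfold List.Chain'; rw [List.isChain_append]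
  refine ⟨hc.prefix (List.take_prefix _ _), ?_, ?_⟩
  · rw [List.isChain_reverse, show (fun a b => G.Adj b a) = G.Adj from flip_adj]
    exact hc.suffix (List.drop_suffix _ _)
  · intro a ha b hb
    have hta : (l.take (i+1)).getLast? = l[i]? := by
      rw [getLast?_eq_getElem?, List.length_take, List.getElem?_take]
      rw [if_pos (by omega)]
      congr 1
      omega
    have htb : (l.drop (i+1)).reverse.head? = l.getLast? := by
      rw [List.head?_reverse, getLast?_eq_getElem?, List.getElem?_drop,
        getLast?_eq_getElem?, List.length_drop]
      congr 1
      omega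
    rw [hta, hy] at ha
    rw [htb, hx] at hb
    simp only [Option.mem_def, Option.some.injEq] at ha hb
    subst ha; subst hb
    exact hadj.symm

lemma mem_edgesOf_rot {l : List V} {i : ℕ} (hi : i + 1 < l.length) {e : Sym2 V}
    (he : e ∈ edgesOf l)
    (hrem : ∀ a b, l[i]? = some a → l[i+1]? = some b → e ≠ s(a,b)) :
    e ∈ edgesOf (rot l i) := by
  rw [mem_edgesOf] at he
  obtain ⟨i0, a, b, ha, hb, rfl⟩ := he
  have hb' := (List.getElem?_eq_some_iff.mp hb).1
  rcases lt_trichotomy i0 i with hlt | rfl | hgt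
  · -- edge inside take part
    apply mem_edgesOf_prefix (b := (l.drop (i+1)).reverse)
    rw [mem_edgesOf]
    exact ⟨i0, a, b, by rw [List.getElem?_take, if_pos (by omega)]; exact ha,
      by rw [List.getElem?_take, if_pos (by omega)]; exact hb, rfl⟩
  · exact absurd rfl (hrem a b ha hb)
  · -- edge inside drop part
    apply mem_edgesOf_suffix (a := l.take (i+1))
    apply mem_edgesOf_reverse_of
    rw [mem_edgesOf]
    refine ⟨i0 - (i+1), a, b, ?_, ?_, rfl⟩
    · rw [List.getElem?_drop, show i + 1 + (i0 - (i+1)) = i0 by omega]; exact ha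
    · rw [List.getElem?_drop, show i + 1 + (i0 - (i+1) + 1) = i0 + 1 by omega]; exact hb

variable (G)

inductive Derived (P0 : List V) : List V → Prop
  | base : Derived P0 P0
  | step {Q : List V} {i : ℕ} {x y : V} : Derived P0 Q → Q.getLast? = some x →
      Q[i]? = some y → i + 2 < Q.length → G.Adj x y → Derived P0 (rot Q i)

variable {G}

lemma Derived.perm {P0 Q : List V} (hd : Derived G P0 Q) : Q.Perm P0 := by
  induction hd with
  | base => exact List.Perm.refl _
  | step hQ hx hy hlt hadj ih => exact (rot_perm _ _).trans ih

lemma Derived.head? {P0 Q : List V} (hd : Derived G P0 Q) : Q.head? = P0.head? := by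
  induction hd with
  | base => rfl
  | @step Q i x y hQ hx hy hlt hadj ih =>
    rw [head?_rot _ _ (by intro hQnil; rw [hQnil] at hlt; simp at hlt), ih]

lemma Derived.nodup {P0 Q : List V} (hnd : P0.Nodup) (hd : Derived G P0 Q) : Q.Nodup :=
  hd.perm.nodup_iff.mpr hnd

lemma Derived.length {P0 Q : List V} (hd : Derived G P0 Q) : Q.length = P0.length :=
  hd.perm.length_eq

lemma Derived.chain' {P0 Q : List V} (hc : P0.Chain' G.Adj) (hd : Derived G P0 Q) :
    Q.Chain' G.Adj := by
  induction hd with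
  | base => exact hc
  | @step Q i x y hQ hx hy hlt hadj ih => exact chain'_rot ih hx hy hadj (by omega)

variable (G) [Fintype V]

noncomputable def ENDset (P0 : List V) : Finset V :=
  Finset.univ.filter (fun u => ∃ Q, Derived G P0 Q ∧ Q.getLast? = some u)

variable {G}

lemma mem_ENDset {P0 : List V} {u : V} :
    u ∈ ENDset G P0 ↔ ∃ Q, Derived G P0 Q ∧ Q.getLast? = some u := by
  simp [ENDset]

lemma getLast_mem_ENDset {P0 : List V} (hne : P0 ≠ []) :
    P0.getLast hne ∈ ENDset G P0 :=
  mem_ENDset.mpr ⟨P0, Derived.base, List.getLast?_eq_getLast hne⟩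

lemma derived_edges {P0 Q : List V} (hd : Derived G P0 Q) {e : Sym2 V}
    (he : e ∈ edgesOf P0) (hend : ∀ x ∈ e, x ∉ ENDset G P0) : e ∈ edgesOf Q := by
  induction hd with
  | base => exact he
  | @step Q i x y hQ hx hy hlt hadj ih =>
    refine mem_edgesOf_rot (by omega) ih ?_
    rintro a b ha hb rfl
    have hmem : b ∈ ENDset G P0 := by
      refine mem_ENDset.mpr ⟨rot Q i, Derived.step hQ hx hy hlt hadj, ?_⟩
      rw [getLast?_rot _ _ (by omega)]
      exact hb
    exact hend b (Sym2.mem_mk_right a b) hmem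

lemma extNbhd_charge {h : ℕ} (hh2 : 2 ≤ h)
    (hmax : ∀ (u v : V) (p : G.Walk u v), p.IsPath → p.length ≤ h)
    (hnocycle : ∀ (u : V) (c : G.Walk u u), c.IsCycle → c.length ≠ h + 1)
    {P0 : List V} (hnd : P0.Nodup) (hc : P0.Chain' G.Adj) (hlen : P0.length = h + 1)
    {w : V} (hwE : w ∉ ENDset G P0) {u0 : V} (hu0E : u0 ∈ ENDset G P0)
    (hadj : G.Adj u0 w) :
    ∃ (u : V) (b : Bool) (i : ℕ), u ∈ ENDset G P0 ∧ P0[i]? = some u ∧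
      P0[cond b (i+1) (i-1)]? = some w := by
  obtain ⟨Q, hQ, hQlast⟩ := mem_ENDset.mp hu0E
  have hQnd := hQ.nodup hnd
  have hQc := hQ.chain' hc
  have hQlen : Q.length = h + 1 := hQ.length.trans hlen
  have hQne : Q ≠ [] := by
    intro h'; rw [h'] at hQlen; simp at hQlen
  have hP0ne : P0 ≠ [] := by
    intro h'; rw [h'] at hlen; simp at hlen
  have hu0 : Q.getLast hQne = u0 := by
    have h1 := List.getLast?_eq_getLast hQne
    rw [hQlast] at h1
    exact (Option.some_injective _ h1).symm
  -- w lies on Q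
  have hwQ : w ∈ Q := by
    by_contra hwQ
    have hnd' : (Q ++ [w]).Nodup := by
      rw [List.nodup_append]
      exact ⟨hQnd, List.nodup_singleton w, by simpa using fun a ha (hab : a = w) => hwQ (hab ▸ ha)⟩
    have hc' : (Q ++ [w]).Chain' G.Adj := by
      unfold List.Chain'; rw [List.isChain_append]
      refine ⟨hQc, List.isChain_singleton _, ?_⟩
      intro x hx y hy
      rw [hQlast] at hx
      simp only [Option.mem_def, Option.some.injEq, List.head?_cons] at hx hy
      subst hx; subst hy
      exact hadj
    have h2 := list_path_length_le hmax _ hnd' hc'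
    rw [List.length_append, List.length_singleton, hQlen] at h2
    omega
  have hwP0 : w ∈ P0 := hQ.perm.subset hwQ
  obtain ⟨j, hj, hjw⟩ := List.mem_iff_getElem.mp hwP0
  have hjw? : P0[j]? = some w := List.getElem?_eq_some_iff.mpr ⟨hj, hjw⟩
  have hj0 : j ≠ 0 := by
    rintro rfl
    have hwh : Q.head? = some w := by
      rw [hQ.head?, head?_eq_get0]; exact hjw?
    have hwh' : Q.head hQne = w := by
      rw [List.head?_eq_head hQne] at hwh
      exact Option.some_injective _ hwh
    exact no_closing_edge hh2 hnocycle Q hQnd hQc hQlen hQne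
      (by rw [hu0, hwh']; exact hadj)
  have hjlt : j + 1 < P0.length := by
    by_contra h'
    have hj' : j = P0.length - 1 := by omega
    have : w = P0.getLast hP0ne := by
      rw [List.getLast_eq_getElem, ← hjw]
      congr 1
      try omega
    exact hwE (this ▸ getLast_mem_ENDset hP0ne)
  have ha? : P0[j-1]? = some (P0[j-1]'(by omega)) := List.getElem?_eq_getElem _
  have hb? : P0[j+1]? = some (P0[j+1]'(by omega)) := List.getElem?_eq_getElem _
  set a := P0[j-1]'(by omega) with ha_def
  set b' := P0[j+1]'(by omega) with hb_def
  by_contra hgoal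
  push_neg at hgoal
  have haE : a ∉ ENDset G P0 := by
    intro hmem
    exact hgoal a true (j-1) hmem ha? (by rw [show j - 1 + 1 = j by omega]; exact hjw?)
  have hbE : b' ∉ ENDset G P0 := by
    intro hmem
    exact hgoal b' false (j+1) hmem hb? (by simpa using hjw?)
  -- the two P0-edges at w survive in Q
  have hane : a ≠ b' := by
    intro h'
    have := hnd.getElem_inj_iff.mp (ha_def ▸ hb_def ▸ h')
    omega
  have haw : w ≠ a := by
    intro h'
    have := hnd.getElem_inj_iff.mp (h' ▸ hjw : P0[j] = P0[j-1]'(by omega))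
    omega
  have hbw : w ≠ b' := by
    intro h'
    have := hnd.getElem_inj_iff.mp (h' ▸ hjw : P0[j] = P0[j+1]'(by omega))
    omega
  have hea : s(a, w) ∈ edgesOf Q := by
    refine derived_edges hQ ?_ ?_
    · rw [mem_edgesOf]
      exact ⟨j-1, a, w, ha?, by rw [show j - 1 + 1 = j by omega]; exact hjw?, rfl⟩
    · intro x hx
      rw [Sym2.mem_iff] at hx
      rcases hx with rfl | rfl
      · exact haE
      · exact hwE
  have heb : s(b', w) ∈ edgesOf Q := by
    refine derived_edges hQ ?_ ?_
    · rw [mem_edgesOf]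
      exact ⟨j, w, b', hjw?, hb?, Sym2.eq_swap⟩
    · intro x hx
      rw [Sym2.mem_iff] at hx
      rcases hx with rfl | rfl
      · exact hbE
      · exact hwE
  -- position of w in Q
  obtain ⟨jQ, hjQ, hjQw⟩ := List.mem_iff_getElem.mp hwQ
  have hjQw? : Q[jQ]? = some w := List.getElem?_eq_some_iff.mpr ⟨hjQ, hjQw⟩
  have hjQ0 : jQ ≠ 0 := by
    rintro rfl
    have hwh : Q.head? = some w := by
      rw [head?_eq_get0]; exact hjQw?
    rw [hQ.head?, head?_eq_get0] at hwh
    have : P0[0]? = some w := hwh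
    have := nodup_idx_unique hnd this hjw?
    omega
  have hjQlt : jQ + 1 < Q.length := by
    by_contra h'
    have : Q[Q.length - 1]? = some u0 := by
      rw [← getLast?_eq_getElem?]; exact hQlast
    have hwu : w = u0 := by
      have h2 : Q[jQ]? = some u0 := by
        rw [show jQ = Q.length - 1 by omega]; exact this
      rw [hjQw?] at h2
      exact Option.some_injective _ h2
    exact hwE (hwu ▸ hu0E)
  -- neighbors of w in Q
  have hQa := edge_mem_nodup hQnd hjQw? hea
  have hQb := edge_mem_nodup hQnd hjQw? heb
  have hd : Q[jQ+1]? = some a ∨ Q[jQ+1]? = some b' := by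
    rcases hQa with h1 | h1
    · rcases hQb with h2 | h2
      · rw [h1] at h2
        exact absurd (Option.some_injective _ h2) hane
      · exact Or.inr h2
    · exact Or.inl h1
  obtain ⟨d, hd?, hdab⟩ : ∃ d, Q[jQ+1]? = some d ∧ (d = a ∨ d = b') := by
    rcases hd with h1 | h1
    · exact ⟨a, h1, Or.inl rfl⟩
    · exact ⟨b', h1, Or.inr rfl⟩
  have hdE : d ∉ ENDset G P0 := by
    rcases hdab with rfl | rfl
    · exact haE
    · exact hbE
  have hjQ2 : jQ + 2 < Q.length := by
    by_contra h'
    have h2 : Q[jQ+1]? = some u0 := by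
      rw [show jQ + 1 = Q.length - 1 by omega, ← getLast?_eq_getElem?]
      exact hQlast
    rw [hd?] at h2
    exact hdE ((Option.some_injective _ h2) ▸ hu0E)
  -- rotate!
  have hrot : Derived G P0 (rot Q jQ) := Derived.step hQ hQlast hjQw? hjQ2 hadj
  have : d ∈ ENDset G P0 := by
    refine mem_ENDset.mpr ⟨rot Q jQ, hrot, ?_⟩
    rw [getLast?_rot _ _ (by omega)]
    exact hd?
  exact hdE this

variable {V : Type*} [DecidableEq V] [Fintype V] {G : SimpleGraph V}

lemma posa_core {h k : ℕ} (hh2 : 2 ≤ h)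
    (hmax : ∀ (u v : V) (p : G.Walk u v), p.IsPath → p.length ≤ h)
    (hnocycle : ∀ (u : V) (c : G.Walk u u), c.IsCycle → c.length ≠ h + 1)
    (hexp : IsTwoExpander G k)
    {P0 : List V} (hnd : P0.Nodup) (hc : P0.Chain' G.Adj) (hlen : P0.length = h + 1) :
    k + 1 ≤ (ENDset G P0).card := by
  set E := ENDset G P0 with hE
  by_contra hcon
  push_neg at hcon
  have hcard : E.card ≤ k := by omega
  have hexpE := hexp E hcard
  have hP0ne : P0 ≠ [] := by intro h'; rw [h'] at hlen; simp at hlen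
  have hul : P0.getLast hP0ne ∈ E := getLast_mem_ENDset hP0ne
  have hul? : P0[P0.length - 1]? = some (P0.getLast hP0ne) := by
    rw [← getLast?_eq_getElem?]
    exact List.getLast?_eq_getLast hP0ne
  have hch : ∀ w ∈ extNbhd G E, ∃ (u : V) (b : Bool) (i : ℕ),
      u ∈ E ∧ P0[i]? = some u ∧ P0[cond b (i+1) (i-1)]? = some w := by
    intro w hw
    simp only [extNbhd, Finset.mem_filter, Finset.mem_univ, true_and] at hw
    obtain ⟨hwE, u0, hu0E, hadj⟩ := hw
    exact extNbhd_charge hh2 hmax hnocycle hnd hc hlen hwE hu0E hadj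
  choose! u b i hu hiu hiw using hch
  have hinj : Set.InjOn (fun w => (u w, b w)) ↑(extNbhd G E) := by
    intro w1 h1 w2 h2 heq
    rw [Finset.mem_coe] at h1 h2
    have hu12 : u w1 = u w2 := congrArg Prod.fst heq
    have hb12 : b w1 = b w2 := congrArg Prod.snd heq
    have hi12 : i w1 = i w2 := nodup_idx_unique hnd (hiu w1 h1) (hu12 ▸ hiu w2 h2)
    have e1 := hiw w1 h1
    have e2 := hiw w2 h2
    rw [← hb12, ← hi12, e1] at e2
    exact Option.some_injective _ e2
  have hmapsto : ∀ w ∈ extNbhd G E,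
      (u w, b w) ∈ (E ×ˢ (Finset.univ : Finset Bool)).erase (P0.getLast hP0ne, true) := by
    intro w hw
    rw [Finset.mem_erase]
    constructor
    · intro heq
      have huw : u w = P0.getLast hP0ne := congrArg Prod.fst heq
      have hbw : b w = true := congrArg Prod.snd heq
      have hiwlen : i w = P0.length - 1 := nodup_idx_unique hnd (hiu w hw) (huw ▸ hul?)
      have := hiw w hw
      rw [hbw, hiwlen] at this
      simp only [cond_true] at this
      rw [List.getElem?_eq_none (by omega)] at this
      exact absurd this (by simp)
    · rw [Finset.mem_product]
      exact ⟨hu w hw, Finset.mem_univ _⟩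
  have hcard2 : (extNbhd G E).card ≤ 2 * E.card - 1 := by
    have h1 := Finset.card_le_card_of_injOn _ hmapsto hinj
    rw [Finset.card_erase_of_mem (by rw [Finset.mem_product]; exact ⟨hul, Finset.mem_univ _⟩),
      Finset.card_product] at h1
    simpa [Finset.card_univ, mul_comm] using h1
  have hpos : 1 ≤ E.card := Finset.card_pos.mpr ⟨_, hul⟩
  omega


lemma booster {h : ℕ} (hh2 : 2 ≤ h)
    (hnocycle : ∀ (u : V) (c : G.Walk u u), c.IsCycle → c.length ≠ h + 1)
    {L : List V} (hnd : L.Nodup) (hc : L.Chain' G.Adj) (hlen : L.length = h + 1)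
    {x y : V} (hhead : L.head? = some y) (hlast : L.getLast? = some x) :
    ¬ (s(x,y)).IsDiag ∧ s(x,y) ∉ G.edgeSet ∧
      ∃ (u : V) (c : (G ⊔ SimpleGraph.fromEdgeSet {s(x,y)}).Walk u u),
        c.IsCycle ∧ c.length = h + 1 := by
  have hLne : L ≠ [] := by intro h'; rw [h'] at hlen; simp at hlen
  have hhead' : L.head hLne = y := by
    rw [List.head?_eq_head hLne] at hhead
    exact Option.some_injective _ hhead
  have hlast' : L.getLast hLne = x := by
    rw [List.getLast?_eq_getLast hLne] at hlast
    exact Option.some_injective _ hlast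
  have hxy : x ≠ y := by
    rintro rfl
    have h0 : L[0]? = some x := by rw [← head?_eq_get0, hhead]
    have h1 : L[L.length - 1]? = some x := by rw [← getLast?_eq_getElem?, hlast]
    have := nodup_idx_unique hnd h0 h1
    omega
  have hnadj : ¬ G.Adj x y := by
    rw [← hhead', ← hlast']
    exact no_closing_edge hh2 hnocycle L hnd hc hlen hLne
  have hnedge : s(x,y) ∉ G.edgeSet := by rwa [SimpleGraph.mem_edgeSet]
  refine ⟨by rwa [Sym2.mk_isDiag_iff], hnedge, ?_⟩
  obtain ⟨p0, hp0s, hp0e⟩ := exists_walk G L hc hLne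
  set G' := G ⊔ SimpleGraph.fromEdgeSet {s(x,y)} with hG'
  have hle : G ≤ G' := le_sup_left
  set p := p0.copy hhead' hlast' with hp
  have hps : p.support = L := by rw [hp, SimpleGraph.Walk.support_copy]; exact hp0s
  have hpe : p.edges = edgesOf L := by rw [hp, SimpleGraph.Walk.edges_copy]; exact hp0e
  have hpath : p.IsPath := p.isPath_def.mpr (by rw [hps]; exact hnd)
  have hplen : p.length = h := by
    have := p.length_support
    rw [hps, hlen] at this
    omega
  have hedge : ∀ e ∈ p.edges, e ∈ G'.edgeSet :=
    fun e he => SimpleGraph.edgeSet_mono hle (p.edges_subset_edgeSet he)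
  set p' := p.transfer G' hedge with hp'
  have hadjG' : G'.Adj x y := by
    rw [hG', SimpleGraph.sup_adj]
    exact Or.inr ((SimpleGraph.fromEdgeSet_adj _).mpr ⟨rfl, hxy⟩)
  refine ⟨x, SimpleGraph.Walk.cons hadjG' p', ?_, ?_⟩
  · rw [SimpleGraph.Walk.cons_isCycle_iff]
    refine ⟨hpath.transfer hedge, ?_⟩
    rw [hp', SimpleGraph.Walk.edges_transfer]
    intro hmem
    exact hnedge (p.edges_subset_edgeSet hmem)
  · rw [SimpleGraph.Walk.length_cons, hp', SimpleGraph.Walk.length_transfer, hplen]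

end PosaAux


open PosaAux in
theorem stmt_5 {V : Type*} [Fintype V] [DecidableEq V] (G : SimpleGraph V)
    (h k : ℕ) (hh : 0 < h) (hk : 0 < k)
    (hlong : ∃ (u v : V) (p : G.Walk u v), p.IsPath ∧ p.length = h)
    (hmax : ∀ (u v : V) (p : G.Walk u v), p.IsPath → p.length ≤ h)
    (hnocycle : ∀ (u : V) (c : G.Walk u u), c.IsCycle → c.length ≠ h + 1)
    (hexp : IsTwoExpander G k) :
    ∃ B : Finset (Sym2 V),
      (∀ e ∈ B, ¬ e.IsDiag ∧ e ∉ G.edgeSet ∧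
        ∃ (u : V) (c : (G ⊔ SimpleGraph.fromEdgeSet {e}).Walk u u),
          c.IsCycle ∧ c.length = h + 1) ∧
      (k + 1) ^ 2 ≤ 2 * B.card := by
  classical
  obtain ⟨u₀, v₀, p₀, hp₀, hp₀len⟩ := hlong
  -- first, h ≥ 2
  have hh2 : 2 ≤ h := by
    have h1 := hexp {u₀} (by simp; omega)
    rw [Finset.card_singleton] at h1
    obtain ⟨a, ha, b, hb, hab⟩ := Finset.one_lt_card.mp
      (show 1 < (extNbhd G {u₀}).card by omega)
    simp only [extNbhd, Finset.mem_filter, Finset.mem_univ, true_and,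
      Finset.mem_singleton] at ha hb
    obtain ⟨hau, a', ha', hadja⟩ := ha
    obtain ⟨hbu, b', hb', hadjb⟩ := hb

    rw [ha'] at hadja
    rw [hb'] at hadjb
    have hchain : List.Chain' G.Adj [a, u₀, b] := by
      refine List.isChain_cons_cons.mpr ⟨hadja.symm, ?_⟩
      exact List.isChain_cons_cons.mpr ⟨hadjb, List.isChain_singleton _⟩
    have hnd3 : ([a, u₀, b] : List V).Nodup := by
      simp only [List.nodup_cons, List.mem_cons, List.mem_singleton, List.not_mem_nil,
        List.nodup_nil, not_or, and_true, not_false_eq_true]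
      exact ⟨⟨hau, hab⟩, fun hebu => hbu hebu.symm⟩
    have := list_path_length_le hmax _ hnd3 hchain
    simp only [List.length_cons, List.length_singleton] at this
    omega
  set P0 := p₀.support with hP0
  have hnd : P0.Nodup := hp₀.support_nodup
  have hc : P0.Chain' G.Adj := p₀.isChain_adj_support
  have hlen : P0.length = h + 1 := by rw [hP0, p₀.length_support, hp₀len]
  have hEND0 : k + 1 ≤ (ENDset G P0).card := posa_core hh2 hmax hnocycle hexp hnd hc hlen
  have hkey : ∀ y ∈ ENDset G P0, ∃ (L : List V), L.Nodup ∧ L.Chain' G.Adj ∧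
      L.length = h + 1 ∧ L.head? = some y := by
    intro y hy
    obtain ⟨Q, hQ, hQl⟩ := mem_ENDset.mp hy
    refine ⟨Q.reverse, List.nodup_reverse.mpr (hQ.nodup hnd), ?_, ?_, ?_⟩
    · unfold List.Chain'; rw [List.isChain_reverse, show (fun a b => G.Adj b a) = G.Adj from flip_adj]
      exact hQ.chain' hc
    · rw [List.length_reverse, hQ.length, hlen]
    · rw [List.head?_reverse]; exact hQl
  choose! R hRnd hRc hRlen hRhead using hkey
  set f : V → Finset V := fun y => ENDset G (R y) with hf
  have hfcard : ∀ y ∈ ENDset G P0, k + 1 ≤ (f y).card := fun y hy =>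
    posa_core hh2 hmax hnocycle hexp (hRnd y hy) (hRc y hy) (hRlen y hy)
  set B : Finset (Sym2 V) := Finset.univ.filter (fun e => ¬ e.IsDiag ∧ e ∉ G.edgeSet ∧
    ∃ (u : V) (c : (G ⊔ SimpleGraph.fromEdgeSet {e}).Walk u u),
      c.IsCycle ∧ c.length = h + 1) with hB
  refine ⟨B, fun e he => (Finset.mem_filter.mp he).2, ?_⟩
  have hmemB : ∀ y ∈ ENDset G P0, ∀ x ∈ f y, s(x,y) ∈ B := by
    intro y hy x hx
    obtain ⟨Q2, hQ2, hQ2l⟩ := mem_ENDset.mp hx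
    have h1 := hQ2.nodup (hRnd y hy)
    have h2 := hQ2.chain' (hRc y hy)
    have h3 : Q2.length = h + 1 := hQ2.length.trans (hRlen y hy)
    have h4 : Q2.head? = some y := hQ2.head?.trans (hRhead y hy)
    have hb := booster hh2 hnocycle h1 h2 h3 h4 hQ2l
    rw [hB, Finset.mem_filter]
    exact ⟨Finset.mem_univ _, hb⟩
  set S : Finset ((_ : V) × V) := (ENDset G P0).sigma (fun y => f y) with hS
  have hScard : (k+1)^2 ≤ S.card := by
    rw [hS, Finset.card_sigma]
    calc (k+1)^2 = (k+1) * (k+1) := by ring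
    _ ≤ (ENDset G P0).card * (k+1) := Nat.mul_le_mul_right _ hEND0
    _ = ∑ _y ∈ ENDset G P0, (k+1) := by rw [Finset.sum_const, smul_eq_mul]
    _ ≤ ∑ y ∈ ENDset G P0, (f y).card := Finset.sum_le_sum hfcard
  set g : ((_ : V) × V) → Sym2 V := fun q => s(q.2, q.1) with hg
  have himg : S.image g ⊆ B := by
    intro e he
    obtain ⟨q, hq, rfl⟩ := Finset.mem_image.mp he
    rw [hS, Finset.mem_sigma] at hq
    exact hmemB q.1 hq.1 q.2 hq.2
  have hfib : ∀ e ∈ S.image g, (S.filter (fun q => g q = e)).card ≤ 2 := by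
    intro e he
    obtain ⟨q0, hq0, rfl⟩ := Finset.mem_image.mp he
    obtain ⟨q0a, q0b⟩ := q0
    have hsub : S.filter (fun q => g q = g ⟨q0a, q0b⟩) ⊆
        {⟨q0a, q0b⟩, ⟨q0b, q0a⟩} := by
      intro q hq
      obtain ⟨qa, qb⟩ := q
      obtain ⟨hqS, hqe⟩ := Finset.mem_filter.mp hq
      rw [hg] at hqe
      simp only [Sym2.eq_iff] at hqe
      rcases hqe with ⟨h1, h2⟩ | ⟨h1, h2⟩
      · subst h1; subst h2
        exact Finset.mem_insert_self _ _
      · subst h1; subst h2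
        exact Finset.mem_insert_of_mem (Finset.mem_singleton_self _)
    calc (S.filter (fun q => g q = g ⟨q0a, q0b⟩)).card
        ≤ ({⟨q0a, q0b⟩, ⟨q0b, q0a⟩} : Finset ((_ : V) × V)).card := Finset.card_le_card hsub
      _ ≤ 2 := by
          apply le_trans (Finset.card_insert_le _ _)
          simp
  have hS2 : S.card ≤ 2 * (S.image g).card := Finset.card_le_mul_card_image S 2 hfib
  have hBc : (S.image g).card ≤ B.card := Finset.card_le_card himg
  calc (k+1)^2 ≤ S.card := hScard
    _ ≤ 2 * (S.image g).card := hS2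
    _ ≤ 2 * B.card := Nat.mul_le_mul_left _ hBc
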